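/- For all z, z' ∈ ℝ^d with |z| ≤ C, the Gibbs densities satisfy d_TV(π_{z'}, π_z) ≤ ((B/γ) · exp(3(BC + R)/γ) + 1/C) · |z' − z|. -/

import Mathlib

open MeasureTheory
open scoped RealInnerProductSpace

/-- The Gibbs probability density `π_z(a) ∝ exp((f(a)·z + r(a))/γ)` on the set `𝒜`. -/
noncomputable def gibbs {m d : ℕ} (𝒜 : Set (EuclideanSpace ℝ (Fin m))) (γ : ℝ)
    (f : EuclideanSpace ℝ (Fin m) → EuclideanSpace ℝ (Fin d))
    (r : EuclideanSpace ℝ (Fin m) → ℝ)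
    (z : EuclideanSpace ℝ (Fin d)) (a : EuclideanSpace ℝ (Fin m)) : ℝ :=
  Real.exp ((⟪f a, z⟫ + r a) / γ) /
    ∫ a' in 𝒜, Real.exp ((⟪f a', z⟫ + r a') / γ)

/-- Total variation distance between two densities on `𝒜`:
`d_TV(p,q) = sup_{A ⊆ 𝒜 measurable} |∫_A p − ∫_A q|`. -/
noncomputable def dTV {m : ℕ} (𝒜 : Set (EuclideanSpace ℝ (Fin m)))
    (p q : EuclideanSpace ℝ (Fin m) → ℝ) : ℝ :=
  ⨆ A : {A : Set (EuclideanSpace ℝ (Fin m)) // MeasurableSet A ∧ A ⊆ 𝒜},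
    |(∫ a in A.1, p a) - ∫ a in A.1, q a|

/-- The (unnormalized) Gibbs weight. -/
noncomputable def gw {m d : ℕ} (γ : ℝ) (f : EuclideanSpace ℝ (Fin m) → EuclideanSpace ℝ (Fin d))
    (r : EuclideanSpace ℝ (Fin m) → ℝ) (w : EuclideanSpace ℝ (Fin d))
    (a : EuclideanSpace ℝ (Fin m)) : ℝ :=
  Real.exp ((⟪f a, w⟫ + r a) / γ)

/-- The normalizing constant. -/
noncomputable def Zf {m d : ℕ} (𝒜 : Set (EuclideanSpace ℝ (Fin m))) (γ : ℝ)
    (f : EuclideanSpace ℝ (Fin m) → EuclideanSpace ℝ (Fin d))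
    (r : EuclideanSpace ℝ (Fin m) → ℝ) (w : EuclideanSpace ℝ (Fin d)) : ℝ :=
  ∫ a in 𝒜, gw γ f r w a

theorem stmt1 {m d : ℕ}
    (𝒜 : Set (EuclideanSpace ℝ (Fin m)))
    (h𝒜 : IsCompact 𝒜) (h𝒜0 : 0 < volume 𝒜) (h𝒜fin : volume 𝒜 < ⊤)
    (γ C B R : ℝ) (hγ : 0 < γ) (hC : 0 < C) (hB : 0 < B) (hR : 0 < R)
    (f : EuclideanSpace ℝ (Fin m) → EuclideanSpace ℝ (Fin d))
    (r : EuclideanSpace ℝ (Fin m) → ℝ)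
    (hf : Measurable f) (hr : Measurable r)
    (hfB : ∀ a ∈ 𝒜, ‖f a‖ ≤ B) (hrR : ∀ a ∈ 𝒜, |r a| ≤ R)
    (z z' : EuclideanSpace ℝ (Fin d)) (hz : ‖z‖ ≤ C) :
    dTV 𝒜 (gibbs 𝒜 γ f r z') (gibbs 𝒜 γ f r z) ≤
      (B / γ * Real.exp (3 * (B * C + R) / γ) + 1 / C) * ‖z' - z‖ := by
  have hA_meas : MeasurableSet 𝒜 := h𝒜.measurableSet
  set δ := ‖z' - z‖ with hδdef
  have hδ0 : 0 ≤ δ := norm_nonneg _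
  have hgwpos : ∀ (w : EuclideanSpace ℝ (Fin d)) a, 0 < gw γ f r w a :=
    fun w a => Real.exp_pos _
  have hmeas : ∀ w : EuclideanSpace ℝ (Fin d), Measurable (gw γ f r w) := fun w =>
    Real.measurable_exp.comp (((hf.inner measurable_const).add hr).div_const γ)
  have hint : ∀ w : EuclideanSpace ℝ (Fin d), IntegrableOn (gw γ f r w) 𝒜 := by
    intro w
    refine ⟨(hmeas w).aestronglyMeasurable, ?_⟩
    refine HasFiniteIntegral.restrict_of_bounded (C := Real.exp ((B * ‖w‖ + R) / γ)) h𝒜fin ?_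
    filter_upwards [ae_restrict_mem hA_meas] with a ha
    rw [Real.norm_eq_abs, abs_of_pos (hgwpos w a)]
    refine Real.exp_le_exp.2 ((div_le_div_iff_of_pos_right hγ).2 ?_)
    have h2 : ⟪f a, w⟫ ≤ ‖f a‖ * ‖w‖ := real_inner_le_norm _ _
    have h3 := hfB a ha
    have h4 := (abs_le.1 (hrR a ha)).2
    nlinarith [norm_nonneg w, norm_nonneg (f a)]
  have hZpos : ∀ w : EuclideanSpace ℝ (Fin d), 0 < Zf 𝒜 γ f r w := by
    intro w
    have h1 : ∫ _ in 𝒜, Real.exp (-(B * ‖w‖ + R) / γ) ≤ Zf 𝒜 γ f r w := by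
      refine setIntegral_mono_on (integrableOn_const h𝒜fin.ne) (hint w) hA_meas ?_
      intro a ha
      refine Real.exp_le_exp.2 ((div_le_div_iff_of_pos_right hγ).2 ?_)
      have h2 := (abs_le.1 (abs_real_inner_le_norm (f a) w)).1
      have h3 := hfB a ha
      have h4 := (abs_le.1 (hrR a ha)).1
      nlinarith [norm_nonneg w, norm_nonneg (f a)]
    have h0 : 0 < ∫ _ in 𝒜, Real.exp (-(B * ‖w‖ + R) / γ) := by
      rw [setIntegral_const, smul_eq_mul]
      exact mul_pos (ENNReal.toReal_pos h𝒜0.ne' h𝒜fin.ne) (Real.exp_pos _)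
    linarith
  set u : ℝ := Real.exp (B * δ / γ) with hu
  have hu1 : (1:ℝ) ≤ u := Real.one_le_exp (by positivity)
  have hu0 : (0:ℝ) < u := Real.exp_pos _
  -- pointwise comparison of weights
  have hpt : ∀ w₁ w₂ : EuclideanSpace ℝ (Fin d), ‖w₁ - w₂‖ ≤ δ → ∀ a ∈ 𝒜,
      gw γ f r w₁ a ≤ u * gw γ f r w₂ a := by
    intro w₁ w₂ hw a ha
    have h1 : ⟪f a, w₁⟫ - ⟪f a, w₂⟫ ≤ B * δ := by
      have h2 : ⟪f a, w₁ - w₂⟫ ≤ ‖f a‖ * ‖w₁ - w₂‖ := real_inner_le_norm _ _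
      rw [inner_sub_right] at h2
      nlinarith [hfB a ha, norm_nonneg (w₁ - w₂), norm_nonneg (f a)]
    rw [hu]
    unfold gw
    rw [← Real.exp_add, ← add_div]
    refine Real.exp_le_exp.2 ((div_le_div_iff_of_pos_right hγ).2 ?_)
    linarith
  -- comparison of normalizing constants
  have hZle : ∀ w₁ w₂ : EuclideanSpace ℝ (Fin d), ‖w₁ - w₂‖ ≤ δ →
      Zf 𝒜 γ f r w₁ ≤ u * Zf 𝒜 γ f r w₂ := by
    intro w₁ w₂ hw
    have h1 : Zf 𝒜 γ f r w₁ ≤ ∫ a in 𝒜, u * gw γ f r w₂ a :=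
      setIntegral_mono_on (hint w₁) ((hint w₂).const_mul u) hA_meas (hpt w₁ w₂ hw)
    rwa [integral_const_mul] at h1
  -- pointwise comparison of densities: q ≤ u² p
  have hqp : ∀ a ∈ 𝒜, gw γ f r z a / Zf 𝒜 γ f r z ≤
      u ^ 2 * (gw γ f r z' a / Zf 𝒜 γ f r z') := by
    intro a ha
    have h1 := hpt z z' (by rw [norm_sub_rev]) a ha
    have h2 := hZle z' z le_rfl
    have hz0 := hZpos z
    have hz'0 := hZpos z'
    have hg'0 := hgwpos z' a
    have hg0 := hgwpos z a
    rw [← mul_div_assoc, div_le_div_iff₀ hz0 hz'0]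
    nlinarith [mul_le_mul h1 h2 hz'0.le (by positivity : (0:ℝ) ≤ u * gw γ f r z' a)]
  -- total mass one
  have hPint : ∀ w : EuclideanSpace ℝ (Fin d),
      ∫ a in 𝒜, gw γ f r w a / Zf 𝒜 γ f r w = 1 := by
    intro w
    rw [integral_div]
    exact div_self (hZpos w).ne'
  -- key one-sided estimate
  have key : ∀ A : Set (EuclideanSpace ℝ (Fin m)), MeasurableSet A → A ⊆ 𝒜 →
      (∫ a in A, gw γ f r z a / Zf 𝒜 γ f r z) -
        (∫ a in A, gw γ f r z' a / Zf 𝒜 γ f r z') ≤ 1 - (u ^ 2)⁻¹ := by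
    intro A hAm hAs
    have hqA : IntegrableOn (fun a => gw γ f r z a / Zf 𝒜 γ f r z) A :=
      IntegrableOn.mono_set ((hint z).div_const _) hAs
    have hpA : IntegrableOn (fun a => gw γ f r z' a / Zf 𝒜 γ f r z') A :=
      IntegrableOn.mono_set ((hint z').div_const _) hAs
    have h1 : (u ^ 2)⁻¹ * ∫ a in A, gw γ f r z a / Zf 𝒜 γ f r z ≤
        ∫ a in A, gw γ f r z' a / Zf 𝒜 γ f r z' := by
      rw [← integral_const_mul]
      refine setIntegral_mono_on (hqA.const_mul _) hpA hAm ?_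
      intro a ha
      rw [inv_mul_le_iff₀ (pow_pos hu0 2)]
      exact hqp a (hAs ha)
    have hq0 : 0 ≤ ∫ a in A, gw γ f r z a / Zf 𝒜 γ f r z :=
      setIntegral_nonneg hAm fun a _ => div_nonneg (hgwpos z a).le (hZpos z).le
    have hq1 : ∫ a in A, gw γ f r z a / Zf 𝒜 γ f r z ≤ 1 := by
      rw [← hPint z]
      refine setIntegral_mono_set ((hint z).div_const _)
        (Filter.Eventually.of_forall fun a => div_nonneg (hgwpos z a).le (hZpos z).le) hAs.eventuallyLE
    have hu2 : (u ^ 2)⁻¹ ≤ 1 := by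
      rw [inv_le_one_iff₀]
      right
      nlinarith
    nlinarith
  -- two-sided estimate
  have habs : ∀ A : Set (EuclideanSpace ℝ (Fin m)), MeasurableSet A → A ⊆ 𝒜 →
      |(∫ a in A, gw γ f r z' a / Zf 𝒜 γ f r z') -
        ∫ a in A, gw γ f r z a / Zf 𝒜 γ f r z| ≤ 1 - (u ^ 2)⁻¹ := by
    intro A hAm hAs
    rw [abs_sub_le_iff]
    constructor
    · have hcomp : ∀ w : EuclideanSpace ℝ (Fin d),
          (∫ a in A, gw γ f r w a / Zf 𝒜 γ f r w) +
            (∫ a in 𝒜 \ A, gw γ f r w a / Zf 𝒜 γ f r w) = 1 := by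
        intro w
        rw [← setIntegral_union Set.disjoint_sdiff_right (hA_meas.diff hAm)
          (IntegrableOn.mono_set ((hint w).div_const _) hAs)
          (IntegrableOn.mono_set ((hint w).div_const _) Set.diff_subset),
          Set.union_diff_cancel hAs]
        exact hPint w
      have h2 := key (𝒜 \ A) (hA_meas.diff hAm) Set.diff_subset
      linarith [hcomp z, hcomp z']
    · exact key A hAm hAs
  -- final numeric bound
  have hfinal : 1 - (u ^ 2)⁻¹ ≤
      (B / γ * Real.exp (3 * (B * C + R) / γ) + 1 / C) * δ := by
    set E := Real.exp (3 * (B * C + R) / γ) with hE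
    have hE1 : (1:ℝ) ≤ E := Real.one_le_exp (by positivity)
    clear_value E
    clear_value u
    clear_value δ
    have hu2inv0 : (0:ℝ) ≤ (u ^ 2)⁻¹ := by positivity
    have ht : 1 - (u ^ 2)⁻¹ ≤ 2 * B * δ / γ := by
      have heq : (u ^ 2)⁻¹ = Real.exp (-(2 * B * δ / γ)) := by
        rw [hu, sq, ← Real.exp_add, ← Real.exp_neg]
        ring_nf
      rw [heq]
      linarith [Real.add_one_le_exp (-(2 * B * δ / γ))]
    have hBγ0 : (0:ℝ) < B / γ := div_pos hB hγ
    rcases le_or_gt C δ with hCδ | hCδ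
    · have h1 : (1:ℝ) ≤ 1 / C * δ := by
        rw [div_mul_eq_mul_div, one_mul, le_div_iff₀ hC]
        linarith
      have h2 : (0:ℝ) ≤ B / γ * E * δ := mul_nonneg (mul_nonneg hBγ0.le (by linarith)) hδ0
      nlinarith
    · have hcoef : 2 * (B / γ) ≤ B / γ * E + 1 / C := by
        rcases le_or_gt 2 E with hE2 | hE2
        · have := mul_le_mul_of_nonneg_left hE2 hBγ0.le
          have h1C : (0:ℝ) < 1 / C := by positivity
          calc 2 * (B / γ) = B / γ * 2 := by ring
            _ ≤ B / γ * E := this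
            _ ≤ B / γ * E + 1 / C := by linarith
        · have hs : 3 * (B * C + R) / γ < 1 := by
            by_contra h
            push_neg at h
            have := Real.add_one_le_exp (3 * (B * C + R) / γ)
            rw [← hE] at this
            linarith
          have hBC : 3 * (B * C) < γ := by
            rw [div_lt_one hγ] at hs
            nlinarith
          have h2 : B / γ < 1 / C := by
            rw [div_lt_div_iff₀ hγ hC]
            nlinarith
          have h3 : B / γ * 1 ≤ B / γ * E := mul_le_mul_of_nonneg_left hE1 hBγ0.le
          linarith [h2, h3]
      calc 1 - (u ^ 2)⁻¹ ≤ 2 * B * δ / γ := ht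
        _ = 2 * (B / γ) * δ := by ring
        _ ≤ (B / γ * E + 1 / C) * δ := mul_le_mul_of_nonneg_right hcoef hδ0
  unfold dTV
  refine Real.iSup_le ?_ (mul_nonneg (by positivity) hδ0)
  rintro ⟨A, hAm, hAs⟩
  exact le_trans (habs A hAm hAs) hfinal
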